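/- Let τ > 0, let h : ℝ → ℝ be strictly increasing and Lipschitz with constant ρ^h > 0, let v̄ ∈ ℝ be constant and β̄ = v̄. Suppose β : I → ℝ is differentiable and v : I → ℝ is a given input with τ β̇(t) = −β(t) + v(t) on an interval I. Then the Bregman-type storage function S(t) := τ·∫_{β̄}^{β(t)} (h(s) − h(β̄)) ds is nonnegative, vanishes exactly when β(t) = β̄, and satisfies at every t ∈ I: dS/dt ≤ −(1/ρ^h)·(h(β(t)) − h(β̄))² + (h(β(t)) − h(β̄))·(v(t) − v̄). Hence the first-order block with output u = h(β) is output strictly incrementally passive with coefficient (ρ^h)^{-1}. -/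

import Mathlib

/-- for the first-order block `τβ̇ = −β + v` with strictly increasing,
`ρʰ`-Lipschitz output map `u = h(β)`, the Bregman-type storage
`S = τ·∫_{β̄}^{β}(h(s) − h(β̄))ds` is nonnegative, vanishes exactly at `β = β̄`, and
satisfies `dS/dt ≤ −(1/ρʰ)(h(β) − h(β̄))² + (h(β) − h(β̄))(v − v̄)`; hence the block is
output strictly incrementally passive with coefficient `(ρʰ)⁻¹`. -/
theorem first_order_block_output_strictly_incrementally_passive
    (τ ρh : ℝ) (hτ : 0 < τ) (hρh : 0 < ρh)
    (h : ℝ → ℝ) (hmono : StrictMono h) (hlip : ∀ x y : ℝ, |h x - h y| ≤ ρh * |x - y|)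
    (v' β' : ℝ) (hβ' : β' = v')
    (I : Set ℝ) (β v : ℝ → ℝ)
    (hβ : ∀ t ∈ I, HasDerivAt β ((-(β t) + v t) / τ) t) :
    (∀ t : ℝ, 0 ≤ τ * ∫ s in β'..(β t), (h s - h β')) ∧
      (∀ t : ℝ, (τ * ∫ s in β'..(β t), (h s - h β')) = 0 ↔ β t = β') ∧
      (∀ t ∈ I, ∃ S' : ℝ,
        HasDerivAt (fun r => τ * ∫ s in β'..(β r), (h s - h β')) S' t ∧
          S' ≤ -(1 / ρh) * (h (β t) - h β') ^ 2 + (h (β t) - h β') * (v t - v')) := by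
  have hcont : Continuous h := by
    have hL : LipschitzWith (Real.toNNReal ρh) h := by
      apply LipschitzWith.of_dist_le_mul
      intro x y
      have := hlip x y
      simpa [Real.dist_eq, Real.coe_toNNReal ρh hρh.le] using this
    exact hL.continuous
  have hcont' : Continuous (fun s => h s - h β') := hcont.sub continuous_const
  have hpos : ∀ x : ℝ, x ≠ β' → 0 < ∫ s in β'..x, (h s - h β') := by
    intro x hx
    rcases lt_or_gt_of_ne hx with hlt | hgt
    · have hp : 0 < ∫ s in x..β', (h β' - h s) := by
        apply intervalIntegral.intervalIntegral_pos_of_pos_on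
        · exact (continuous_const.sub hcont).intervalIntegrable x β'
        · intro s hs; exact sub_pos.mpr (hmono hs.2)
        · exact hlt
      have heq : (∫ s in β'..x, (h s - h β')) = ∫ s in x..β', (h β' - h s) := by
        rw [intervalIntegral.integral_symm]
        rw [← intervalIntegral.integral_neg]
        simp [neg_sub]
      rw [heq]; exact hp
    · apply intervalIntegral.intervalIntegral_pos_of_pos_on
      · exact hcont'.intervalIntegrable β' x
      · intro s hs; exact sub_pos.mpr (hmono hs.1)
      · exact hgt
  have hnonneg : ∀ x : ℝ, 0 ≤ ∫ s in β'..x, (h s - h β') := by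
    intro x
    by_cases hx : x = β'
    · simp [hx]
    · exact (hpos x hx).le
  refine ⟨fun t => mul_nonneg hτ.le (hnonneg (β t)), fun t => ?_, fun t ht => ?_⟩
  · constructor
    · intro h0
      by_contra hne
      have := hpos (β t) hne
      nlinarith
    · intro he; simp [he]
  · -- derivative part
    have hg : HasDerivAt (fun x => ∫ s in β'..x, (h s - h β'))
        (h (β t) - h β') (β t) := by
      have := (hcont'.integral_hasStrictDerivAt β' (β t)).hasDerivAt
      simpa using this
    have hcomp := (hg.comp t (hβ t ht)).const_mul τ
    refine ⟨_, hcomp, ?_⟩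
    set a := h (β t) - h β' with ha
    set b := β t - β' with hb
    have hab : 0 ≤ a * b := by
      rcases le_or_gt β' (β t) with hle | hlt
      · exact mul_nonneg (sub_nonneg.mpr (hmono.monotone hle)) (sub_nonneg.mpr hle)
      · have h1 : a ≤ 0 := sub_nonpos.mpr (hmono.monotone hlt.le)
        have h2 : b ≤ 0 := sub_nonpos.mpr hlt.le
        nlinarith
    have hsq : a ^ 2 ≤ ρh * (a * b) := by
      have h1 : |a| ≤ ρh * |b| := hlip (β t) β'
      have h2 : a * b = |a| * |b| := by
        rw [← abs_mul, abs_of_nonneg hab]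
      calc a ^ 2 = |a| * |a| := by rw [abs_mul_abs_self, sq]
        _ ≤ |a| * (ρh * |b|) := mul_le_mul_of_nonneg_left h1 (abs_nonneg a)
        _ = ρh * (|a| * |b|) := by ring
        _ = ρh * (a * b) := by rw [h2]
    have hdiv : (1 / ρh) * a ^ 2 ≤ a * b := by
      rw [div_mul_eq_mul_div, one_mul, div_le_iff₀ hρh]
      linarith [hsq]
    have hval : τ * ((h (β t) - h β') * ((-(β t) + v t) / τ)) =
        a * (-(β t) + v t) := by
      field_simp
      rw [ha]; ring
    rw [hval]
    have hvv : v t - v' = (-(β t) + v t) + b := by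
      rw [hb, hβ']; ring
    rw [hvv, mul_add]
    linarith [hdiv]
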